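/- Every symmetric 'appreciation of friends' additively separable hedonic game satisfies top responsiveness and mutuality, and hence admits a strictly strong Nash stable partition. -/

import Mathlib

open Finset

abbrev Pref (N : Type*) := N → Finset N → Finset N → Prop

def SPref {N : Type*} (pref : Pref N) (i : N) (S T : Finset N) : Prop :=
  pref i S T ∧ ¬ pref i T S

def IsHedonic {N : Type*} (pref : Pref N) : Prop :=
  (∀ (i : N) (S T : Finset N), i ∈ S → i ∈ T → pref i S T ∨ pref i T S) ∧
  (∀ (i : N) (S T U : Finset N), pref i S T → pref i T U → pref i S U)

section Defs

variable {N : Type*} [DecidableEq N] [Fintype N]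

def IsPartition (π : N → Finset N) : Prop :=
  (∀ i, i ∈ π i) ∧ ∀ i j, j ∈ π i → π j = π i

def Reachable (π π' : N → Finset N) (H : Finset N) : Prop :=
  π' ≠ π ∧ ∀ i j, i ∉ H → j ∉ H → i ≠ j → (π i = π j ↔ π' i = π' j)

def WeaklyBlocks (pref : Pref N) (π : N → Finset N) (S : Finset N) : Prop :=
  (∀ i ∈ S, pref i S (π i)) ∧ ∃ j ∈ S, SPref pref j S (π j)

def StrictCoreStable (pref : Pref N) (π : N → Finset N) : Prop :=
  ∀ S : Finset N, ¬ WeaklyBlocks pref π S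

def Blocks (pref : Pref N) (π : N → Finset N) (S : Finset N) : Prop :=
  S.Nonempty ∧ ∀ i ∈ S, SPref pref i S (π i)

def CoreStable (pref : Pref N) (π : N → Finset N) : Prop :=
  ∀ S : Finset N, ¬ Blocks pref π S

def StrongNashBlocks (pref : Pref N) (π : N → Finset N) (H : Finset N) : Prop :=
  H.Nonempty ∧ ∃ π' : N → Finset N, IsPartition π' ∧ Reachable π π' H ∧
    ∀ i ∈ H, SPref pref i (π' i) (π i)

def StrongNashStable (pref : Pref N) (π : N → Finset N) : Prop :=
  ∀ H : Finset N, ¬ StrongNashBlocks pref π H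

def StronglyIndividuallyBlocks (pref : Pref N) (π : N → Finset N) (H : Finset N) : Prop :=
  H.Nonempty ∧ ∃ π' : N → Finset N, IsPartition π' ∧ Reachable π π' H ∧
    (∀ i ∈ H, SPref pref i (π' i) (π i)) ∧
    ∀ j : N, (∃ i ∈ H, j ∈ π' i) → pref j (π' j) (π j)

def StronglyIndividuallyStable (pref : Pref N) (π : N → Finset N) : Prop :=
  ∀ H : Finset N, ¬ StronglyIndividuallyBlocks pref π H

def WeaklyNashBlocks (pref : Pref N) (π : N → Finset N) (H : Finset N) : Prop :=
  H.Nonempty ∧ ∃ π' : N → Finset N, IsPartition π' ∧ Reachable π π' H ∧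
    (∀ i ∈ H, pref i (π' i) (π i)) ∧ ∃ i ∈ H, SPref pref i (π' i) (π i)

def StrictlyStrongNashStable (pref : Pref N) (π : N → Finset N) : Prop :=
  ∀ H : Finset N, ¬ WeaklyNashBlocks pref π H

def NashStable (pref : Pref N) (π : N → Finset N) : Prop :=
  ∀ (i : N) (T : Finset N), (T = ∅ ∨ ∃ j, π j = T) → i ∉ T →
    ¬ SPref pref i (insert i T) (π i)

def IndividuallyStable (pref : Pref N) (π : N → Finset N) : Prop :=
  ∀ (i : N) (T : Finset N), (T = ∅ ∨ ∃ j, π j = T) → i ∉ T →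
    ¬ (SPref pref i (insert i T) (π i) ∧ ∀ j ∈ T, pref j (insert i T) T)

def ParetoOptimal (pref : Pref N) (π : N → Finset N) : Prop :=
  ∀ π' : N → Finset N, IsPartition π' → (∀ j, pref j (π' j) (π j)) →
    ¬ ∃ i, SPref pref i (π' i) (π i)

def PerfectPartition (pref : Pref N) (π : N → Finset N) : Prop :=
  ∀ (i : N) (S : Finset N), i ∈ S → pref i (π i) S

def ChoiceSets (pref : Pref N) (i : N) (X : Finset N) : Set (Finset N) :=
  {S' | S' ⊆ X ∧ i ∈ S' ∧ ∀ S'' ⊆ X, i ∈ S'' → pref i S' S''}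

def TopResponsiveWith (pref : Pref N) (ch : N → Finset N → Finset N) : Prop :=
  (∀ (i : N) (X : Finset N), i ∈ X → ChoiceSets pref i X = {ch i X}) ∧
  (∀ (i : N) (X Y : Finset N), i ∈ X → i ∈ Y →
      SPref pref i (ch i X) (ch i Y) → SPref pref i X Y) ∧
  (∀ (i : N) (X Y : Finset N), i ∈ X → i ∈ Y →
      ch i X = ch i Y → X ⊂ Y → SPref pref i X Y)

def MutualTop (ch : N → Finset N → Finset N) : Prop :=
  ∀ (i j : N) (X : Finset N), i ∈ X → j ∈ X → (i ∈ ch j X ↔ j ∈ ch i X)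

def AvoidSets (pref : Pref N) (i : N) (X : Finset N) : Set (Finset N) :=
  {S' | S' ⊆ X ∧ i ∈ S' ∧ ∀ S'' ⊆ X, i ∈ S'' → pref i S'' S'}

def BottomResponsive (pref : Pref N) : Prop :=
  (∀ (i : N) (X Y : Finset N), i ∈ X → i ∈ Y →
      (∀ X' ∈ AvoidSets pref i X, ∀ Y' ∈ AvoidSets pref i Y, SPref pref i X' Y') →
      SPref pref i X Y) ∧
  (∀ (i : N) (X Y : Finset N), i ∈ X → i ∈ Y →
      (AvoidSets pref i X ∩ AvoidSets pref i Y).Nonempty → Y.card ≤ X.card → pref i X Y)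

def StrongBottomResponsiveWith (pref : Pref N) (av : N → Finset N → Finset N) : Prop :=
  BottomResponsive pref ∧
    ∀ (i : N) (X : Finset N), i ∈ X → AvoidSets pref i X = {av i X}

def MutualBottom (av : N → Finset N → Finset N) : Prop :=
  ∀ (i j : N) (X : Finset N), i ∈ X → j ∈ X → (i ∈ av j X ↔ j ∈ av i X)

end Defs

/-- Additively separable preferences induced by the valuation `v`. -/
def ASHGpref {N : Type*} [DecidableEq N] (v : N → N → ℤ) : Pref N := fun i S T =>
  ∑ j ∈ T.erase i, v i j ≤ ∑ j ∈ S.erase i, v i j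

section AoFAux

variable {N : Type*} [DecidableEq N] [Fintype N]

/-- Friends of `i` inside `S`. -/
def FrAoF (v : N → N → ℤ) (i : N) (S : Finset N) : Finset N :=
  (S.erase i).filter (fun j => v i j = (Fintype.card N : ℤ))

/-- Enemies of `i` inside `S`. -/
def EnAoF (v : N → N → ℤ) (i : N) (S : Finset N) : Finset N :=
  (S.erase i).filter (fun j => ¬ v i j = (Fintype.card N : ℤ))

variable {v : N → N → ℤ}

lemma mem_FrAoF {i j : N} {S : Finset N} :
    j ∈ FrAoF v i S ↔ j ∈ S ∧ j ≠ i ∧ v i j = (Fintype.card N : ℤ) := by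
  simp only [FrAoF, Finset.mem_filter, Finset.mem_erase]
  tauto

lemma FrAoF_subset {i : N} {S : Finset N} : FrAoF v i S ⊆ S :=
  fun j hj => (mem_FrAoF.1 hj).1

lemma FrAoF_mono {i : N} {S T : Finset N} (h : S ⊆ T) : FrAoF v i S ⊆ FrAoF v i T := by
  intro j hj
  rw [mem_FrAoF] at *
  exact ⟨h hj.1, hj.2⟩

lemma not_mem_FrAoF_self {i : N} {S : Finset N} : i ∉ FrAoF v i S := by
  simp [mem_FrAoF]

lemma util_eq (hAoF : ∀ i j : N, i ≠ j → v i j = -1 ∨ v i j = (Fintype.card N : ℤ))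
    (i : N) (S : Finset N) :
    ∑ j ∈ S.erase i, v i j
      = (Fintype.card N : ℤ) * (FrAoF v i S).card - (EnAoF v i S).card := by
  classical
  rw [← Finset.sum_filter_add_sum_filter_not (S.erase i)
      (fun j => v i j = (Fintype.card N : ℤ))]
  have h1 : ∑ j ∈ (S.erase i).filter (fun j => v i j = (Fintype.card N : ℤ)), v i j
      = (Fintype.card N : ℤ) * (FrAoF v i S).card := by
    rw [Finset.sum_congr rfl (fun j hj => (Finset.mem_filter.1 hj).2)]
    simp [FrAoF, mul_comm]
  have h2 : ∑ j ∈ (S.erase i).filter (fun j => ¬ v i j = (Fintype.card N : ℤ)), v i j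
      = -((EnAoF v i S).card : ℤ) := by
    have hterm : ∀ j ∈ (S.erase i).filter (fun j => ¬ v i j = (Fintype.card N : ℤ)),
        v i j = -1 := by
      intro j hj
      have hj' := Finset.mem_filter.1 hj
      have hji : j ≠ i := Finset.ne_of_mem_erase hj'.1
      rcases hAoF i j hji.symm with h | h
      · exact h
      · exact absurd h hj'.2
    rw [Finset.sum_congr rfl hterm]
    simp [EnAoF]
  rw [h1, h2]
  ring

lemma EnAoF_card_lt (i : N) (S : Finset N) :
    ((EnAoF v i S).card : ℤ) < (Fintype.card N : ℤ) := by
  have h1 : EnAoF v i S ⊆ Finset.univ.erase i := by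
    intro j hj
    have hj' := Finset.mem_filter.1 hj
    exact Finset.mem_erase.2 ⟨Finset.ne_of_mem_erase hj'.1, Finset.mem_univ j⟩
  have h2 : (EnAoF v i S).card ≤ (Finset.univ.erase i).card := Finset.card_le_card h1
  have h3 : (Finset.univ.erase i).card = Fintype.card N - 1 := by
    rw [Finset.card_erase_of_mem (Finset.mem_univ i), Finset.card_univ]
  have h4 : 0 < Fintype.card N := Fintype.card_pos_iff.2 ⟨i⟩
  omega

lemma sPref_iff {i : N} {S T : Finset N} :
    SPref (ASHGpref v) i S T ↔ ∑ j ∈ T.erase i, v i j < ∑ j ∈ S.erase i, v i j := by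
  rw [lt_iff_le_not_ge]
  exact Iff.rfl

lemma util_lt_of_fr (hAoF : ∀ i j : N, i ≠ j → v i j = -1 ∨ v i j = (Fintype.card N : ℤ))
    {i : N} {S T : Finset N} (hF : (FrAoF v i T).card < (FrAoF v i S).card) :
    ∑ j ∈ T.erase i, v i j < ∑ j ∈ S.erase i, v i j := by
  rw [util_eq hAoF, util_eq hAoF]
  have hE : ((EnAoF v i S).card : ℤ) < (Fintype.card N : ℤ) := EnAoF_card_lt i S
  have hET : (0 : ℤ) ≤ (EnAoF v i T).card := Int.natCast_nonneg _
  have hcast : ((FrAoF v i T).card : ℤ) + 1 ≤ (FrAoF v i S).card := by exact_mod_cast hF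
  have hn : (0 : ℤ) ≤ (Fintype.card N : ℤ) := Int.natCast_nonneg _
  nlinarith

/-- Choice set: player together with all friends in `X`. -/
def chAoF (v : N → N → ℤ) (i : N) (X : Finset N) : Finset N :=
  insert i (FrAoF v i X)

lemma mem_chAoF {i j : N} {X : Finset N} :
    j ∈ chAoF v i X ↔ j = i ∨ (j ∈ X ∧ j ≠ i ∧ v i j = (Fintype.card N : ℤ)) := by
  simp [chAoF, mem_FrAoF]

lemma FrAoF_chAoF {i : N} {X : Finset N} : FrAoF v i (chAoF v i X) = FrAoF v i X := by
  ext j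
  rw [mem_FrAoF, mem_chAoF, mem_FrAoF]
  tauto

lemma EnAoF_chAoF {i : N} {X : Finset N} : EnAoF v i (chAoF v i X) = ∅ := by
  ext j
  simp only [EnAoF, Finset.mem_filter, Finset.mem_erase, Finset.notMem_empty, iff_false,
    mem_chAoF]
  tauto

lemma util_chAoF (hAoF : ∀ i j : N, i ≠ j → v i j = -1 ∨ v i j = (Fintype.card N : ℤ))
    (i : N) (X : Finset N) :
    ∑ j ∈ (chAoF v i X).erase i, v i j
      = (Fintype.card N : ℤ) * (FrAoF v i X).card := by
  rw [util_eq hAoF, FrAoF_chAoF, EnAoF_chAoF]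
  simp

lemma chAoF_opt (hAoF : ∀ i j : N, i ≠ j → v i j = -1 ∨ v i j = (Fintype.card N : ℤ))
    {i : N} {X S : Finset N} (hS : S ⊆ X) :
    ∑ j ∈ S.erase i, v i j ≤ ∑ j ∈ (chAoF v i X).erase i, v i j := by
  rw [util_chAoF hAoF, util_eq hAoF]
  have h1 : ((FrAoF v i S).card : ℤ) ≤ (FrAoF v i X).card := by
    exact_mod_cast Finset.card_le_card (FrAoF_mono hS)
  have h2 : (0 : ℤ) ≤ (EnAoF v i S).card := Int.natCast_nonneg _
  have hn : (0 : ℤ) ≤ (Fintype.card N : ℤ) := Int.natCast_nonneg _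
  nlinarith

lemma choiceSets_eq (hAoF : ∀ i j : N, i ≠ j → v i j = -1 ∨ v i j = (Fintype.card N : ℤ))
    {i : N} {X : Finset N} (hiX : i ∈ X) :
    ChoiceSets (ASHGpref v) i X = {chAoF v i X} := by
  have hchX : chAoF v i X ⊆ X := by
    rw [chAoF]
    exact Finset.insert_subset hiX FrAoF_subset
  have hich : i ∈ chAoF v i X := Finset.mem_insert_self _ _
  ext S
  simp only [ChoiceSets, Set.mem_setOf_eq, Set.mem_singleton_iff]
  constructor
  · rintro ⟨hSX, hiS, hopt⟩
    -- S is also optimal, so its utility equals that of chAoF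
    have h1 := hopt (chAoF v i X) hchX hich
    have h2 := chAoF_opt (v := v) hAoF (i := i) hSX
    -- hence equal utilities
    have hequ : ∑ j ∈ S.erase i, v i j = ∑ j ∈ (chAoF v i X).erase i, v i j :=
      le_antisymm h2 h1
    rw [util_chAoF hAoF, util_eq hAoF] at hequ
    have hFle : (FrAoF v i S).card ≤ (FrAoF v i X).card :=
      Finset.card_le_card (FrAoF_mono hSX)
    have hE0 : (0 : ℤ) ≤ (EnAoF v i S).card := Int.natCast_nonneg _
    have hn : (0 : ℤ) < (Fintype.card N : ℤ) := by
      exact_mod_cast Fintype.card_pos_iff.2 ⟨i⟩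
    have hFle' : ((FrAoF v i S).card : ℤ) ≤ (FrAoF v i X).card := by exact_mod_cast hFle
    have hFeq : ((FrAoF v i S).card : ℤ) = (FrAoF v i X).card := by nlinarith
    have hEeq : ((EnAoF v i S).card : ℤ) = 0 := by nlinarith
    have hFeq' : (FrAoF v i S).card = (FrAoF v i X).card := by exact_mod_cast hFeq
    have hFset : FrAoF v i S = FrAoF v i X :=
      Finset.eq_of_subset_of_card_le (FrAoF_mono hSX) (le_of_eq hFeq'.symm)
    have hEempty : EnAoF v i S = ∅ := by
      rw [← Finset.card_eq_zero]
      exact_mod_cast hEeq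
    have herase : S.erase i = FrAoF v i S := by
      have := Finset.filter_union_filter_not_eq
        (fun j => v i j = (Fintype.card N : ℤ)) (S.erase i)
      rw [← this]
      have : (S.erase i).filter (fun j => ¬ v i j = (Fintype.card N : ℤ)) = ∅ := hEempty
      rw [this, Finset.union_empty]
      rfl
    have : S = insert i (S.erase i) := (Finset.insert_erase hiS).symm
    rw [this, herase, hFset, chAoF]
  · rintro rfl
    exact ⟨hchX, hich, fun S'' hS'' _ => chAoF_opt hAoF hS''⟩

/-- The friendship adjacency relation. -/
def AdjAoF (v : N → N → ℤ) (a b : N) : Prop :=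
  a ≠ b ∧ v a b = (Fintype.card N : ℤ)

open Classical in
/-- Connected component of the friendship graph. -/
noncomputable def compAoF (v : N → N → ℤ) (i : N) : Finset N :=
  Finset.univ.filter (fun j => Relation.ReflTransGen (AdjAoF v) i j)

lemma mem_compAoF {i j : N} :
    j ∈ compAoF v i ↔ Relation.ReflTransGen (AdjAoF v) i j := by
  classical
  simp [compAoF]

end AoFAux

/-- Every symmetric 'appreciation of friends' additively separable hedonic game satisfies
top responsiveness and mutuality, and hence admits a strictly strong Nash stable
partition. -/
theorem appreciationOfFriends_SSNS {N : Type*} [DecidableEq N] [Fintype N]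
    (v : N → N → ℤ) (hsym : ∀ i j : N, v i j = v j i)
    (hAoF : ∀ i j : N, i ≠ j → v i j = -1 ∨ v i j = (Fintype.card N : ℤ)) :
    (∃ ch : N → Finset N → Finset N,
      TopResponsiveWith (ASHGpref v) ch ∧ MutualTop ch) ∧
    ∃ π : N → Finset N, IsPartition π ∧ StrictlyStrongNashStable (ASHGpref v) π := by
  classical
  constructor
  · -- Part 1: top responsiveness and mutuality
    refine ⟨chAoF v, ⟨?_, ?_, ?_⟩, ?_⟩
    · intro i X hiX
      exact choiceSets_eq hAoF hiX
    · intro i X Y hiX hiY hsp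
      rw [sPref_iff] at hsp ⊢
      rw [util_chAoF hAoF, util_chAoF hAoF] at hsp
      have hF : (FrAoF v i Y).card < (FrAoF v i X).card := by
        by_contra h
        push_neg at h
        have h' : ((FrAoF v i X).card : ℤ) ≤ (FrAoF v i Y).card := by exact_mod_cast h
        have hn0 : (0 : ℤ) ≤ (Fintype.card N : ℤ) := Int.natCast_nonneg _
        nlinarith
      exact util_lt_of_fr hAoF hF
    · intro i X Y hiX hiY hch hXY
      rw [sPref_iff, util_eq hAoF, util_eq hAoF]
      have hFr : FrAoF v i X = FrAoF v i Y := by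
        have h1 : FrAoF v i X = (chAoF v i X).erase i := by
          rw [chAoF, Finset.erase_insert not_mem_FrAoF_self]
        have h2 : FrAoF v i Y = (chAoF v i Y).erase i := by
          rw [chAoF, Finset.erase_insert not_mem_FrAoF_self]
        rw [h1, h2, hch]
      obtain ⟨j, hjY, hjX⟩ := Finset.exists_of_ssubset hXY
      have hEsub : EnAoF v i X ⊆ EnAoF v i Y := by
        intro k hk
        have hk' := Finset.mem_filter.1 hk
        exact Finset.mem_filter.2
          ⟨Finset.mem_erase.2 ⟨Finset.ne_of_mem_erase hk'.1,
            hXY.1 (Finset.mem_of_mem_erase hk'.1)⟩, hk'.2⟩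
      have hji : j ≠ i := fun h => hjX (h ▸ hiX)
      have hjEn : j ∈ EnAoF v i Y := by
        refine Finset.mem_filter.2 ⟨Finset.mem_erase.2 ⟨hji, hjY⟩, ?_⟩
        intro hv
        have : j ∈ FrAoF v i Y := mem_FrAoF.2 ⟨hjY, hji, hv⟩
        rw [← hFr] at this
        exact hjX (FrAoF_subset this)
      have hjEnX : j ∉ EnAoF v i X := by
        intro h
        exact hjX (Finset.mem_of_mem_erase (Finset.mem_filter.1 h).1)
      have hEcard : (EnAoF v i X).card < (EnAoF v i Y).card :=
        Finset.card_lt_card (Finset.ssubset_iff_of_subset hEsub |>.2 ⟨j, hjEn, hjEnX⟩)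
      have hEcard' : ((EnAoF v i X).card : ℤ) < (EnAoF v i Y).card := by exact_mod_cast hEcard
      rw [hFr]
      linarith
    · -- mutuality
      intro i j X hiX hjX
      simp only [mem_chAoF]
      rw [hsym j i]
      constructor
      · rintro (rfl | ⟨_, h1, h2⟩)
        · exact Or.inl rfl
        · exact Or.inr ⟨hjX, h1.symm, h2⟩
      · rintro (rfl | ⟨_, h1, h2⟩)
        · exact Or.inl rfl
        · exact Or.inr ⟨hiX, h1.symm, h2⟩
  · -- Part 2: strictly strong Nash stable partition
    have hAdjSymm : Symmetric (AdjAoF v) := fun a b h =>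
      ⟨h.1.symm, (hsym b a).trans h.2⟩
    have hRsymm : ∀ {a b : N}, Relation.ReflTransGen (AdjAoF v) a b →
        Relation.ReflTransGen (AdjAoF v) b a := by
      intro a b h
      induction h with
      | refl => exact Relation.ReflTransGen.refl
      | tail _ hbc ih => exact Relation.ReflTransGen.head (hAdjSymm hbc) ih
    have hpart : IsPartition (compAoF v) := by
      constructor
      · intro i
        rw [mem_compAoF]
      · intro i j hj
        rw [mem_compAoF] at hj
        ext k
        rw [mem_compAoF, mem_compAoF]
        exact ⟨fun h => hj.trans h, fun h => (hRsymm hj).trans h⟩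
    refine ⟨compAoF v, hpart, ?_⟩
    intro H hblk
    obtain ⟨-, π', hpart', ⟨-, hreach⟩, hall, i₀, hi₀, hstr⟩ := hblk
    -- friends of i are all inside i's component
    have hFruniv : ∀ i : N, FrAoF v i (compAoF v i) = FrAoF v i Finset.univ := by
      intro i
      apply Finset.Subset.antisymm (FrAoF_mono (Finset.subset_univ _))
      intro j hj
      obtain ⟨-, hji, hvij⟩ := mem_FrAoF.1 hj
      have hadj : AdjAoF v i j := ⟨hji.symm, hvij⟩
      have hjc : j ∈ compAoF v i := mem_compAoF.2 (Relation.ReflTransGen.single hadj)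
      exact mem_FrAoF.2 ⟨hjc, hji, hvij⟩
    -- key structural fact for all members of H
    have key : ∀ i ∈ H, FrAoF v i (π' i) = FrAoF v i Finset.univ ∧
        ((EnAoF v i (π' i)).card : ℤ) ≤ ((EnAoF v i (compAoF v i)).card : ℤ) := by
      intro i hi
      have hp : ∑ j ∈ (compAoF v i).erase i, v i j ≤ ∑ j ∈ (π' i).erase i, v i j :=
        hall i hi
      rw [util_eq hAoF, util_eq hAoF] at hp
      have hfc : (FrAoF v i (compAoF v i)).card = (FrAoF v i Finset.univ).card := by
        rw [hFruniv i]
      have hf'le : (FrAoF v i (π' i)).card ≤ (FrAoF v i Finset.univ).card :=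
        Finset.card_le_card (FrAoF_mono (Finset.subset_univ _))
      have hEc := EnAoF_card_lt (v := v) i (compAoF v i)
      have hE' : (0 : ℤ) ≤ ((EnAoF v i (π' i)).card : ℤ) := Int.natCast_nonneg _
      have hn0 : (0 : ℤ) ≤ (Fintype.card N : ℤ) := Int.natCast_nonneg _
      have hf'eq : (FrAoF v i (π' i)).card = (FrAoF v i Finset.univ).card := by
        by_contra h
        have h' : (FrAoF v i (π' i)).card + 1 ≤ (FrAoF v i Finset.univ).card :=
          Nat.succ_le_of_lt (lt_of_le_of_ne hf'le h)
        have h'' : ((FrAoF v i (π' i)).card : ℤ) + 1 ≤ (FrAoF v i Finset.univ).card := by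
          exact_mod_cast h'
        have hfc' : ((FrAoF v i (compAoF v i)).card : ℤ)
            = ((FrAoF v i Finset.univ).card : ℤ) := by exact_mod_cast hfc
        nlinarith
      refine ⟨Finset.eq_of_subset_of_card_le (FrAoF_mono (Finset.subset_univ _))
        (le_of_eq hf'eq.symm), ?_⟩
      rw [hfc, hf'eq] at hp
      linarith
    -- strict improvement for i₀ gives a strictly smaller coalition
    have hstr' : ∑ j ∈ (compAoF v i₀).erase i₀, v i₀ j
        < ∑ j ∈ (π' i₀).erase i₀, v i₀ j := sPref_iff.1 hstr
    rw [util_eq hAoF, util_eq hAoF] at hstr'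
    have hk := key i₀ hi₀
    have hEstrict : (EnAoF v i₀ (π' i₀)).card < (EnAoF v i₀ (compAoF v i₀)).card := by
      have hfc : (FrAoF v i₀ (compAoF v i₀)).card
          = (FrAoF v i₀ Finset.univ).card := congrArg Finset.card (hFruniv i₀)
      have hf' : (FrAoF v i₀ (π' i₀)).card
          = (FrAoF v i₀ Finset.univ).card := congrArg Finset.card hk.1
      rw [hfc, hf'] at hstr'
      have : ((EnAoF v i₀ (π' i₀)).card : ℤ) < ((EnAoF v i₀ (compAoF v i₀)).card : ℤ) := by
        linarith
      exact_mod_cast this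
    have hcarderase : ∀ (i : N) (S : Finset N),
        (FrAoF v i S).card + (EnAoF v i S).card = (S.erase i).card := by
      intro i S
      exact Finset.card_filter_add_card_filter_not
        (fun j => v i j = (Fintype.card N : ℤ))
    have hcardlt : (π' i₀).card < (compAoF v i₀).card := by
      have h1 := hcarderase i₀ (π' i₀)
      have h2 := hcarderase i₀ (compAoF v i₀)
      have h3 : ((π' i₀).erase i₀).card = (π' i₀).card - 1 :=
        Finset.card_erase_of_mem (hpart'.1 i₀)
      have h4 : ((compAoF v i₀).erase i₀).card = (compAoF v i₀).card - 1 :=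
        Finset.card_erase_of_mem (hpart.1 i₀)
      have h5 : 1 ≤ (π' i₀).card := Finset.card_pos.2 ⟨i₀, hpart'.1 i₀⟩
      have h6 : 1 ≤ (compAoF v i₀).card := Finset.card_pos.2 ⟨i₀, hpart.1 i₀⟩
      have h7 : (FrAoF v i₀ (π' i₀)).card = (FrAoF v i₀ (compAoF v i₀)).card := by
        rw [hk.1, hFruniv i₀]
      omega
    -- but the whole component of i₀ must move with it
    have hsub : ∀ j, Relation.ReflTransGen (AdjAoF v) i₀ j → π' j = π' i₀ := by
      intro j hj
      induction hj with
      | refl => rfl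
      | @tail b c hb hadj ih =>
        by_cases hbH : b ∈ H
        · have hcF : c ∈ FrAoF v b Finset.univ :=
            mem_FrAoF.2 ⟨Finset.mem_univ c, hadj.1.symm, hadj.2⟩
          have hcπ' : c ∈ π' b := by
            rw [← (key b hbH).1] at hcF
            exact FrAoF_subset hcF
          rw [← ih]
          exact hpart'.2 b c hcπ'
        · by_cases hcH : c ∈ H
          · have hbF : b ∈ FrAoF v c Finset.univ :=
              mem_FrAoF.2 ⟨Finset.mem_univ b, hadj.1, (hsym c b).trans hadj.2⟩
            have hbπ' : b ∈ π' c := by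
              rw [← (key c hcH).1] at hbF
              exact FrAoF_subset hbF
            have h := hpart'.2 c b hbπ'
            rw [← h]
            exact ih
          · have hπbc : compAoF v b = compAoF v c := by
              have h1 := hpart.2 i₀ b (mem_compAoF.2 hb)
              have h2 := hpart.2 i₀ c (mem_compAoF.2 (hb.tail hadj))
              rw [h1, h2]
            have h3 := (hreach b c hbH hcH hadj.1).1 hπbc
            rw [← h3]
            exact ih
    have hcomp_sub : compAoF v i₀ ⊆ π' i₀ := by
      intro j hj
      have h := hsub j (mem_compAoF.1 hj)
      rw [← h]
      exact hpart'.1 j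
    have := Finset.card_le_card hcomp_sub
    omega
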